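/- The supremum, over all pairs (y_1, y_2) of real numbers with y_1 ≥ y_2 ≥ 0 and y_1 + y_2 = 1, of min(2·y_1, y_1 + 2·y_2) equals 4/3, and it is attained at (y_1, y_2) = (2/3, 1/3). In other words, t_2 = 4/3. -/
import Mathlib

/-- `t_2 = 4/3`: the supremum over `y₁ ≥ y₂ ≥ 0` with `y₁ + y₂ = 1` of
`min(2y₁, y₁ + 2y₂)` equals `4/3`, attained at `(y₁, y₂) = (2/3, 1/3)`. -/
theorem stmt_10 :
    IsGreatest {v : ℝ | ∃ y₁ y₂ : ℝ, y₂ ≤ y₁ ∧ 0 ≤ y₂ ∧ y₁ + y₂ = 1 ∧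
        v = min (2 * y₁) (y₁ + 2 * y₂)} (4 / 3) ∧
    min (2 * (2 / 3 : ℝ)) (2 / 3 + 2 * (1 / 3)) = 4 / 3 := by
  refine ⟨⟨⟨2/3, 1/3, by norm_num⟩, ?_⟩, by norm_num⟩
  rintro v ⟨y₁, y₂, h1, h2, h3, rfl⟩
  rcases le_total y₁ (2/3) with h | h
  · exact (min_le_left _ _).trans (by linarith)
  · exact (min_le_right _ _).trans (by linarith)
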